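/- arXiv:2101.01443 — 6 statements merged into one kernel-verified Lean document; each statement's English description precedes it below -/
import Mathlib

section
/- (Lemma 1, Eq. (3.6).) Let X be a complex Banach space, t₀ ∈ ℝ, and U : ℝ → B(X) differentiable at t₀ with derivative U′, such that U(t₀) is invertible in B(X) and U(t₀) commutes with U′. Let η ∈ ℂ, η ≠ 0, be such that 1 − η⁻¹U(t) is invertible in B(X) for all t, write I_η(t) := (1 − η⁻¹U(t))⁻¹ and I_η := I_η(t₀), and let D ∈ B(X) be the derivative of t ↦ I_η(t) at t₀. Assume I_η − 1 is invertible in B(X) and ν ∈ ℂ is such that I_η + ((ν−η)/η)·1 and I_η + ν·1 are invertible in B(X). Then the infinitesimal generator A := U′ ∘ U(t₀)⁻¹ has the logarithmic representation A = (1 + (ν/η)·(I_η − 1)⁻¹) ∘ ((I_η + ((ν−η)/η)·1)⁻¹ ∘ D) − (1 + ν·I_η⁻¹) ∘ ((I_η + ν·1)⁻¹ ∘ D). -/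
private lemma ring_inv_eq {R : Type*} [MonoidWithZero R] {a b : R} (h1 : a * b = 1)
    (h2 : b * a = 1) : Ring.inverse a = b := by
  have ha : IsUnit a := ⟨⟨a, b, h1, h2⟩, rfl⟩
  calc Ring.inverse a = Ring.inverse a * (a * b) := by rw [h1, mul_one]
    _ = (Ring.inverse a * a) * b := by rw [mul_assoc]
    _ = b := by rw [Ring.inverse_mul_cancel _ ha, one_mul]

/-- Lemma 1, Eq. (3.6): the logarithmic representation of the infinitesimal
generator `A = U' ∘ U(t₀)⁻¹` via the doubly-implemented resolvent, where
`Iη = (1 - η⁻¹ U(t₀))⁻¹` and `D` is the derivative of the resolvent family at `t₀`. -/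
theorem stmt_5 {X : Type*} [NormedAddCommGroup X] [NormedSpace ℂ X] [CompleteSpace X]
    (t₀ : ℝ) (U : ℝ → X →L[ℂ] X) (U' : X →L[ℂ] X)
    (hU : HasDerivAt U U' t₀) (hUinv : IsUnit (U t₀))
    (hcomm : U t₀ * U' = U' * U t₀)
    (η : ℂ) (hη : η ≠ 0)
    (hres : ∀ t : ℝ, IsUnit (1 - η⁻¹ • U t))
    (Iη : X →L[ℂ] X) (hIη : Iη = Ring.inverse (1 - η⁻¹ • U t₀))
    (D : X →L[ℂ] X)
    (hD : HasDerivAt (fun t => Ring.inverse (1 - η⁻¹ • U t)) D t₀)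
    (ν : ℂ)
    (h1 : IsUnit (Iη - 1))
    (h2 : IsUnit (Iη + ((ν - η) / η) • 1))
    (h3 : IsUnit (Iη + ν • 1)) :
    U' * Ring.inverse (U t₀) =
      (1 + (ν / η) • Ring.inverse (Iη - 1)) *
        (Ring.inverse (Iη + ((ν - η) / η) • 1) * D)
      - (1 + ν • Ring.inverse Iη) * (Ring.inverse (Iη + ν • 1) * D) := by
  set u := U t₀ with hu
  set B : X →L[ℂ] X := 1 - η⁻¹ • u with hBdef
  have hB : IsUnit B := hres t₀
  set J : X →L[ℂ] X := Ring.inverse B with hJdef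
  set v : X →L[ℂ] X := Ring.inverse u with hvdef
  have hJB : J * B = 1 := Ring.inverse_mul_cancel _ hB
  have hBJ : B * J = 1 := Ring.mul_inverse_cancel _ hB
  have hvu : v * u = 1 := Ring.inverse_mul_cancel _ hUinv
  have huv : u * v = 1 := Ring.mul_inverse_cancel _ hUinv
  -- derivative formula for D
  have hf : HasDerivAt (fun t => 1 - η⁻¹ • U t) (-(η⁻¹ • U')) t₀ := by
    have h := (hasDerivAt_const t₀ (1 : X →L[ℂ] X)).sub (hU.const_smul η⁻¹)
    rw [zero_sub] at h
    exact h
  have hJu : (↑hB.unit⁻¹ : X →L[ℂ] X) = J := by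
    rw [hJdef, ← Ring.inverse_unit hB.unit, hB.unit_spec]
  have hD' : HasDerivAt (fun t => Ring.inverse (1 - η⁻¹ • U t))
      (J * (η⁻¹ • U') * J) t₀ := by
    have hfd0 := hasFDerivAt_ringInverse (𝕜 := ℝ) hB.unit
    rw [hB.unit_spec] at hfd0
    have hfd := hfd0.comp_hasDerivAt t₀ hf
    have hval : (-(ContinuousLinearMap.mulLeftRight ℝ (X →L[ℂ] X) ↑hB.unit⁻¹ ↑hB.unit⁻¹))
        (-(η⁻¹ • U')) = J * (η⁻¹ • U') * J := by
      simp [ContinuousLinearMap.mulLeftRight_apply, hJu]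
    rw [hval] at hfd
    exact hfd
  have hDval : D = J * (η⁻¹ • U') * J := hD.unique hD'
  -- commutations
  have cuu' : Commute u U' := hcomm
  have cvu' : Commute v U' := by
    have h0 : Commute (↑hUinv.unit : X →L[ℂ] X) U' := by rw [hUinv.unit_spec]; exact cuu'
    have h0' := h0.units_inv_left
    rw [hvdef, ← hUinv.unit_spec, Ring.inverse_unit]
    exact h0'
  -- B * D = η⁻¹ • (U' * J)
  have hBD : B * D = η⁻¹ • (U' * J) := by
    rw [hDval, ← mul_assoc, ← mul_assoc, hBJ, one_mul, smul_mul_assoc]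
  -- Iη = J
  have hIJ : Iη = J := hIη
  -- Ring.inverse Iη = B
  have hinvI : Ring.inverse Iη = B := by
    rw [hIJ]; exact ring_inv_eq hJB hBJ
  -- J - 1 = η⁻¹ • (J * u)
  have hJ1 : Iη - 1 = η⁻¹ • (J * u) := by
    have h5 : J * (1 - B) = η⁻¹ • (J * u) := by
      rw [hBdef]; simp [mul_sub, mul_smul_comm]
    rw [hIJ, ← h5, mul_sub, hJB, mul_one]
  -- Ring.inverse (Iη - 1) = η • (v * B)
  have hinv1 : Ring.inverse (Iη - 1) = η • (v * B) := by
    apply ring_inv_eq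
    · rw [hJ1, smul_mul_smul_comm, inv_mul_cancel₀ hη, one_smul]
      rw [mul_assoc, ← mul_assoc u v, huv, one_mul, hJB]
    · rw [hJ1, smul_mul_smul_comm, mul_inv_cancel₀ hη, one_smul]
      rw [mul_assoc, ← mul_assoc B J, hBJ, one_mul, hvu]
  have hvB : v * B = v - η⁻¹ • 1 := by
    rw [hBdef, mul_sub, mul_one, mul_smul_comm, hvu]
  -- key factorization 1: B * (Iη + ν • 1) = 1 + ν • B
  have key2 : B * (Iη + ν • 1) = 1 + ν • B := by
    rw [hIJ, mul_add, hBJ, mul_smul_comm, mul_one]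
  -- key factorization 2
  have key1 : (η • (v * B)) * (Iη + ((ν - η) / η) • 1) = 1 + ν • (v * B) := by
    rw [hIJ, mul_add, smul_mul_assoc, mul_assoc, hBJ, mul_one,
        smul_mul_smul_comm, mul_one]
    have hk : η * ((ν - η) / η) = ν - η := by
      rw [mul_comm, div_mul_cancel₀ _ hη]
    rw [hk]
    have h5 : (η : ℂ) • (v * B) = η • v - 1 := by
      rw [hvB, smul_sub, smul_smul, mul_inv_cancel₀ hη, one_smul]
    have h6 : ν • (v * B) = (ν - η) • (v * B) + η • (v * B) := by
      rw [← add_smul, sub_add_cancel]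
    rw [h6, h5]; abel
  -- assemble
  rw [hinv1, hinvI, smul_smul, div_mul_cancel₀ _ hη, ← key1, ← key2]
  have T1 : (η • (v * B) * (Iη + ((ν - η) / η) • 1)) *
      (Ring.inverse (Iη + ((ν - η) / η) • 1) * D) = η • (v * B) * D := by
    rw [mul_assoc, ← mul_assoc (Iη + ((ν - η) / η) • 1), Ring.mul_inverse_cancel _ h2, one_mul]
  have T2 : (B * (Iη + ν • 1)) * (Ring.inverse (Iη + ν • 1) * D) = B * D := by
    rw [mul_assoc, ← mul_assoc (Iη + ν • 1), Ring.mul_inverse_cancel _ h3, one_mul]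
  rw [T1, T2, hBD]
  have T1' : (η : ℂ) • (v * B) * D = v * (U' * J) := by
    rw [smul_mul_assoc, mul_assoc, hBD, mul_smul_comm, smul_smul,
        mul_inv_cancel₀ hη, one_smul]
  rw [T1', ← mul_assoc, cvu'.eq, mul_assoc]
  have final : U' * (v * J) - η⁻¹ • (U' * J) = U' * v := by
    have h7 : (η : ℂ)⁻¹ • (U' * J) = U' * (η⁻¹ • J) := (mul_smul_comm _ _ _).symm
    rw [h7, ← mul_sub]
    have hvJ : v * J - η⁻¹ • J = v := by
      calc v * J - η⁻¹ • J = (v - η⁻¹ • 1) * J := by rw [sub_mul, smul_mul_assoc, one_mul]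
        _ = v * B * J := by rw [← hvB]
        _ = v := by rw [mul_assoc, hBJ, mul_one]
    rw [hvJ]
  rw [final]
end

section
/- (Corollary 2, Eq. (3.7).) Let X be a complex Banach space, t₀ ∈ ℝ, and U : ℝ → B(X) differentiable at t₀ with derivative U′, such that U(t₀) is invertible in B(X) and U(t₀) commutes with U′. Let η ∈ ℂ with η ≠ 0, 1 be such that 1 − η⁻¹U(t) is invertible in B(X) for all t, write I_η(t) := (1 − η⁻¹U(t))⁻¹ and I_η := I_η(t₀), and let D ∈ B(X) be the derivative of t ↦ I_η(t) at t₀. Set ν := η/(1−η), and assume I_η² − I_η and I_η + ν·1 are invertible in B(X). Then the infinitesimal generator A := U′ ∘ U(t₀)⁻¹ satisfies A = (I_η² − I_η)⁻¹ ∘ (I_η + ν·1) ∘ ((I_η + ν·1)⁻¹ ∘ D). -/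
/-- Corollary 2, Eq. (3.7): with `ν = η/(1-η)`, the infinitesimal generator
`A = U' ∘ U(t₀)⁻¹` is represented as
`(Iη² - Iη)⁻¹ (Iη + ν) ((Iη + ν)⁻¹ D)`. -/
theorem stmt_6 {X : Type*} [NormedAddCommGroup X] [NormedSpace ℂ X] [CompleteSpace X]
    (t₀ : ℝ) (U : ℝ → X →L[ℂ] X) (U' : X →L[ℂ] X)
    (hU : HasDerivAt U U' t₀) (hUinv : IsUnit (U t₀))
    (hcomm : U t₀ * U' = U' * U t₀)
    (η : ℂ) (hη0 : η ≠ 0) (hη1 : η ≠ 1)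
    (hres : ∀ t : ℝ, IsUnit (1 - η⁻¹ • U t))
    (Iη : X →L[ℂ] X) (hIη : Iη = Ring.inverse (1 - η⁻¹ • U t₀))
    (D : X →L[ℂ] X)
    (hD : HasDerivAt (fun t => Ring.inverse (1 - η⁻¹ • U t)) D t₀)
    (ν : ℂ) (hν : ν = η / (1 - η))
    (h1 : IsUnit (Iη ^ 2 - Iη))
    (h2 : IsUnit (Iη + ν • 1)) :
    U' * Ring.inverse (U t₀) =
      Ring.inverse (Iη ^ 2 - Iη) * (Iη + ν • 1) * (Ring.inverse (Iη + ν • 1) * D) := by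
  -- simplify the RHS: (Iη + ν) * ((Iη + ν)⁻¹ * D) = D
  have hRHS : Ring.inverse (Iη ^ 2 - Iη) * (Iη + ν • 1) * (Ring.inverse (Iη + ν • 1) * D)
      = Ring.inverse (Iη ^ 2 - Iη) * D := by
    rw [mul_assoc, Ring.mul_inverse_cancel_left _ _ h2]
  rw [hRHS]
  set u : X →L[ℂ] X := U t₀ with hu
  set B : X →L[ℂ] X := 1 - η⁻¹ • u with hB
  have hBu : IsUnit B := hres t₀
  have hIB : Iη * B = 1 := hIη ▸ Ring.inverse_mul_cancel B hBu
  have hBI : B * Iη = 1 := hIη ▸ Ring.mul_inverse_cancel B hBu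
  -- commutation facts
  have hBU' : B * U' = U' * B := by
    simp only [hB, sub_mul, mul_sub, one_mul, mul_one, smul_mul_assoc, mul_smul_comm, hcomm]
  have hIU' : Iη * U' = U' * Iη := by
    have : Iη * (U' * B) * Iη = Iη * (B * U') * Iη := by rw [hBU']
    calc Iη * U' = Iη * U' * (B * Iη) := by rw [hBI, mul_one]
      _ = Iη * (U' * B) * Iη := by noncomm_ring
      _ = Iη * (B * U') * Iη := by rw [hBU']
      _ = (Iη * B) * (U' * Iη) := by noncomm_ring
      _ = U' * Iη := by rw [hIB, one_mul]
  have huU' : u * U' = U' * u := hcomm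
  have hIu : Iη * u = u * Iη := by
    have hBu' : B * u = u * B := by
      simp only [hB, sub_mul, mul_sub, one_mul, mul_one, smul_mul_assoc, mul_smul_comm]
    calc Iη * u = Iη * u * (B * Iη) := by rw [hBI, mul_one]
      _ = Iη * (u * B) * Iη := by noncomm_ring
      _ = Iη * (B * u) * Iη := by rw [hBu']
      _ = (Iη * B) * (u * Iη) := by noncomm_ring
      _ = u * Iη := by rw [hIB, one_mul]
  -- compute D
  have hB' : HasDerivAt (fun t => 1 - η⁻¹ • U t) (-(η⁻¹ • U')) t₀ := by
    exact ((hasDerivAt_const t₀ (1 : X →L[ℂ] X)).sub (hU.const_smul η⁻¹)).congr_deriv (by simp)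
  have hprod := hB'.mul hD
  have hfun : (fun t => (1 - η⁻¹ • U t) * Ring.inverse (1 - η⁻¹ • U t))
      = fun _ : ℝ => (1 : X →L[ℂ] X) := by
    funext t; exact Ring.mul_inverse_cancel _ (hres t)
  rw [show ((fun t : ℝ => 1 - η⁻¹ • U t) * fun t : ℝ => Ring.inverse (1 - η⁻¹ • U t)) = fun _ : ℝ => (1 : X →L[ℂ] X) from hfun] at hprod
  have heq : (-(η⁻¹ • U')) * Ring.inverse (1 - η⁻¹ • U t₀) + (1 - η⁻¹ • U t₀) * D = 0 :=
    hprod.unique (hasDerivAt_const _ _)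
  rw [← hIη, ← hu, ← hB] at heq
  have hBD : B * D = η⁻¹ • (U' * Iη) := by
    have := heq
    rw [neg_mul, neg_add_eq_zero] at this
    rw [← this, smul_mul_assoc]
  have hDval : D = η⁻¹ • (Iη * (U' * Iη)) := by
    calc D = (Iη * B) * D := by rw [hIB, one_mul]
      _ = Iη * (B * D) := by rw [mul_assoc]
      _ = Iη * (η⁻¹ • (U' * Iη)) := by rw [hBD]
      _ = η⁻¹ • (Iη * (U' * Iη)) := by rw [mul_smul_comm]
  -- key identity: Iη² - Iη = η⁻¹ • (Iη * Iη * u)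
  have hkey : Iη ^ 2 - Iη = η⁻¹ • (Iη * Iη * u) := by
    have h1B : (1 : X →L[ℂ] X) - B = η⁻¹ • u := by rw [hB, sub_sub_cancel]
    calc Iη ^ 2 - Iη = Iη * Iη - Iη * (B * Iη) := by rw [hBI, mul_one, pow_two]
      _ = Iη * ((1 - B) * Iη) := by noncomm_ring
      _ = Iη * ((η⁻¹ • u) * Iη) := by rw [h1B]
      _ = η⁻¹ • (Iη * (u * Iη)) := by rw [smul_mul_assoc, mul_smul_comm]
      _ = η⁻¹ • (Iη * (Iη * u)) := by rw [hIu]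
      _ = η⁻¹ • (Iη * Iη * u) := by rw [mul_assoc]
  -- main computation
  have hmain : (Iη ^ 2 - Iη) * (U' * Ring.inverse u) = D := by
    calc (Iη ^ 2 - Iη) * (U' * Ring.inverse u)
        = η⁻¹ • (Iη * Iη * u * (U' * Ring.inverse u)) := by rw [hkey, smul_mul_assoc]
      _ = η⁻¹ • (Iη * Iη * ((u * U') * Ring.inverse u)) := by noncomm_ring
      _ = η⁻¹ • (Iη * Iη * ((U' * u) * Ring.inverse u)) := by rw [huU']
      _ = η⁻¹ • (Iη * Iη * U') := by rw [Ring.mul_inverse_cancel_right _ _ hUinv]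
      _ = η⁻¹ • (Iη * (Iη * U')) := by rw [mul_assoc]
      _ = η⁻¹ • (Iη * (U' * Iη)) := by rw [hIU']
      _ = D := hDval.symm
  calc U' * Ring.inverse u
      = Ring.inverse (Iη ^ 2 - Iη) * ((Iη ^ 2 - Iη) * (U' * Ring.inverse u)) := by
        rw [Ring.inverse_mul_cancel_left _ _ h1]
    _ = Ring.inverse (Iη ^ 2 - Iη) * D := by rw [hmain]
end

section
/- (Theorem 3, Eq. (3.9), precise form.) Let X be a complex Banach space, t₀ ∈ ℝ, and U : ℝ → B(X) differentiable at t₀ with derivative U′, such that U(t₀) is invertible in B(X) and U(t₀) commutes with U′. Let η ∈ ℂ, η ≠ 0, be such that 1 − η⁻¹U(t) is invertible in B(X) for all t, write I_η := (1 − η⁻¹U(t₀))⁻¹, let D ∈ B(X) be the derivative of t ↦ (1 − η⁻¹U(t))⁻¹ at t₀, and assume I_η − 1 is invertible in B(X). Let ν ∈ ℂ and let a₁′, a₂′ ∈ B(X) be alternative infinitesimal generators, i.e. there exist a₁, a₂ ∈ B(X) with exp(a₁) = η·I_η + (ν−η)·1 and exp(a₂) = I_η + ν·1 (these are the shifted operators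 of Eq. (3.5)), satisfying the chain-rule relations a₁′ ∘ exp(a₁) = η·D and a₂′ ∘ exp(a₂) = D, and such that a₁′ and a₂′ commute with I_η. Then the infinitesimal generator A := U′ ∘ U(t₀)⁻¹ is represented as A = (1 + ν·(η·(I_η − 1))⁻¹) ∘ a₁′ − (1 + ν·I_η⁻¹) ∘ a₂′. -/
/-- If `a * b = 1` and `b * a = 1` then `Ring.inverse a = b`. -/
lemma stmt8_aux_inv_eq {A : Type*} [Ring A] {a b : A} (h1 : a * b = 1) (h2 : b * a = 1) :
    Ring.inverse a = b :=
  Ring.inverse_unit ⟨a, b, h1, h2⟩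

/-- An element commuting with a unit commutes with its `Ring.inverse`. -/
lemma stmt8_aux_comm_inv {A : Type*} [Ring A] {a b : A} (hb : IsUnit b) (h : a * b = b * a) :
    a * Ring.inverse b = Ring.inverse b * a := by
  apply hb.mul_left_cancel
  rw [← mul_assoc, ← h, mul_assoc, Ring.mul_inverse_cancel b hb, mul_one, ← mul_assoc,
    Ring.mul_inverse_cancel b hb, one_mul]

/-- Theorem 3, Eq. (3.9): the logarithmic representation of the infinitesimal
generator `A = U' ∘ U(t₀)⁻¹` using alternative infinitesimal generators `a₁', a₂'` attached to
the shifted operators `exp a₁ = η Iη + (ν-η) 1` and `exp a₂ = Iη + ν 1`. -/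
theorem stmt_8 {X : Type*} [NormedAddCommGroup X] [NormedSpace ℂ X] [CompleteSpace X]
    (t₀ : ℝ) (U : ℝ → X →L[ℂ] X) (U' : X →L[ℂ] X)
    (hU : HasDerivAt U U' t₀) (hUinv : IsUnit (U t₀))
    (hcomm : U t₀ * U' = U' * U t₀)
    (η : ℂ) (hη : η ≠ 0)
    (hres : ∀ t : ℝ, IsUnit (1 - η⁻¹ • U t))
    (Iη : X →L[ℂ] X) (hIη : Iη = Ring.inverse (1 - η⁻¹ • U t₀))
    (D : X →L[ℂ] X)
    (hD : HasDerivAt (fun t => Ring.inverse (1 - η⁻¹ • U t)) D t₀)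
    (h1 : IsUnit (Iη - 1)) (ν : ℂ)
    (a₁ a₂ a₁' a₂' : X →L[ℂ] X)
    (he1 : NormedSpace.exp a₁ = η • Iη + (ν - η) • 1)
    (he2 : NormedSpace.exp a₂ = Iη + ν • 1)
    (hc1 : a₁' * NormedSpace.exp a₁ = η • D)
    (hc2 : a₂' * NormedSpace.exp a₂ = D)
    (hca1 : a₁' * Iη = Iη * a₁') (hca2 : a₂' * Iη = Iη * a₂') :
    U' * Ring.inverse (U t₀) =
      (1 + ν • Ring.inverse (η • (Iη - 1))) * a₁'
      - (1 + ν • Ring.inverse Iη) * a₂' := by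
  set R : X →L[ℂ] X := 1 - η⁻¹ • U t₀ with hR
  have hRu : IsUnit R := hres t₀
  -- basic inverse identities
  have hIR : Iη * R = 1 := by rw [hIη]; exact Ring.inverse_mul_cancel R hRu
  have hRI : R * Iη = 1 := by rw [hIη]; exact Ring.mul_inverse_cancel R hRu
  set K : X →L[ℂ] X := Ring.inverse (Iη - 1) with hK
  have hK1 : K * (Iη - 1) = 1 := Ring.inverse_mul_cancel _ h1
  have h1K : (Iη - 1) * K = 1 := Ring.mul_inverse_cancel _ h1
  -- Ring.inverse Iη = R
  have hinvI : Ring.inverse Iη = R := stmt8_aux_inv_eq hIR hRI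
  -- Ring.inverse (η • (Iη - 1)) = η⁻¹ • K
  have hinvS : Ring.inverse (η • (Iη - 1)) = η⁻¹ • K := by
    refine stmt8_aux_inv_eq ?_ ?_
    · rw [smul_mul_smul_comm, mul_inv_cancel₀ hη, h1K, one_smul]
    · rw [smul_mul_smul_comm, inv_mul_cancel₀ hη, hK1, one_smul]
  -- U t₀ = η • (1 - R)
  have hU0 : U t₀ = η • ((1 : X →L[ℂ] X) - R) := by
    rw [hR]; rw [sub_sub_cancel, smul_smul, mul_inv_cancel₀ hη, one_smul]
  -- commutations
  have hcKI : K * Iη = Iη * K := by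
    have := stmt8_aux_comm_inv (a := Iη) h1 (by noncomm_ring)
    rw [← hK] at this; exact this.symm
  have hcU'I : U' * Iη = Iη * U' := by
    have hUR : U' * R = R * U' := by
      rw [hR]; simp only [mul_sub, sub_mul, mul_one, one_mul, mul_smul_comm, smul_mul_assoc,
        hcomm]
    rw [hIη]; exact stmt8_aux_comm_inv hRu hUR
  have hcU'K : U' * K = K * U' := stmt8_aux_comm_inv h1 (by
    simp only [mul_sub, sub_mul, mul_one, one_mul, hcU'I])
  -- compute D
  have hDval : D = Iη * (η⁻¹ • U') * Iη := by
    have hf : HasDerivAt (fun t => (1 : X →L[ℂ] X) - η⁻¹ • U t) (-(η⁻¹ • U')) t₀ :=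
      HasDerivAt.const_sub 1 (HasDerivAt.const_smul η⁻¹ hU)
    have hinv := hasFDerivAt_ringInverse (𝕜 := ℝ) (R := X →L[ℂ] X) hRu.unit
    rw [hRu.unit_spec] at hinv
    have hcomp := hinv.comp_hasDerivAt t₀ hf
    have : HasDerivAt (fun t => Ring.inverse ((1 : X →L[ℂ] X) - η⁻¹ • U t))
        (Iη * (η⁻¹ • U') * Iη) t₀ := by
      refine hcomp.congr_deriv ?_; symm
      simp only [ContinuousLinearMap.neg_apply, ContinuousLinearMap.mulLeftRight_apply,
        mul_neg, neg_mul, neg_neg]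
      rw [hIη, ← Ring.inverse_unit hRu.unit, hRu.unit_spec]
    exact hD.unique this
  -- rewrite the prefactors
  have hpre1 : (1 + ν • Ring.inverse (η • (Iη - 1))) * a₁' = K * D := by
    have he1' : NormedSpace.exp a₁ = η • (Iη - 1) + ν • 1 := by
      rw [he1, smul_sub, sub_smul]; abel
    have hcomm1 : (1 + ν • Ring.inverse (η • (Iη - 1)))
        = (η⁻¹ • K) * NormedSpace.exp a₁ := by
      rw [hinvS, he1', mul_add, smul_mul_smul_comm, inv_mul_cancel₀ hη, hK1, one_smul,
        smul_mul_smul_comm, mul_one, mul_comm η⁻¹ ν, ← smul_smul]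
    have hca1' : a₁' * NormedSpace.exp a₁ = NormedSpace.exp a₁ * a₁' := by
      rw [he1]; simp only [mul_add, add_mul, mul_smul_comm, smul_mul_assoc, hca1, mul_one,
        one_mul]
    rw [hcomm1, mul_assoc, ← hca1', hc1, smul_mul_smul_comm, inv_mul_cancel₀ hη, one_smul]
  have hpre2 : (1 + ν • Ring.inverse Iη) * a₂' = R * D := by
    have hcomm2 : (1 + ν • Ring.inverse Iη) = R * NormedSpace.exp a₂ := by
      rw [hinvI, he2, mul_add, hRI, mul_smul_comm, mul_one]
    have hca2' : a₂' * NormedSpace.exp a₂ = NormedSpace.exp a₂ * a₂' := by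
      rw [he2]; simp only [mul_add, add_mul, mul_smul_comm, smul_mul_assoc, hca2, mul_one,
        one_mul]
    rw [hcomm2, mul_assoc, ← hca2', hc2]
  rw [hpre1, hpre2, hDval]
  -- Ring.inverse (U t₀) = η⁻¹ • (K * Iη)
  have hinvU : Ring.inverse (U t₀) = η⁻¹ • (K * Iη) := by
    refine stmt8_aux_inv_eq ?_ ?_
    · rw [hU0, smul_mul_smul_comm, mul_inv_cancel₀ hη, one_smul]
      calc (1 - R) * (K * Iη) = K * ((1 - R) * Iη) := by
            have hc : (1 - R) * K = K * (1 - R) := stmt8_aux_comm_inv h1 (by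
              simp only [sub_mul, mul_sub, one_mul, mul_one, hRI, hIR])
            rw [← mul_assoc, hc, mul_assoc]
        _ = K * (Iη - 1) := by rw [sub_mul, one_mul, hRI]
        _ = 1 := hK1
    · rw [hU0, smul_mul_smul_comm, inv_mul_cancel₀ hη, one_smul]
      calc K * Iη * (1 - R) = K * (Iη - 1) := by rw [mul_assoc, mul_sub, mul_one, hIR]
        _ = 1 := hK1
  rw [hinvU]
  -- final algebraic identity
  have key : K * Iη * Iη - Iη = K * Iη := by
    calc K * Iη * Iη - Iη = K * Iη * Iη - K * (Iη - 1) * Iη := by rw [hK1, one_mul]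
      _ = K * Iη := by noncomm_ring
  have e1 : K * (Iη * η⁻¹ • U' * Iη) = η⁻¹ • (K * (Iη * (Iη * U'))) := by
    rw [mul_smul_comm, smul_mul_assoc, mul_smul_comm]
    congr 1
    rw [mul_assoc Iη U' Iη, hcU'I]
  have e2 : R * (Iη * η⁻¹ • U' * Iη) = η⁻¹ • (Iη * U') := by
    rw [← mul_assoc, ← mul_assoc, hRI, one_mul, smul_mul_assoc, hcU'I]
  have final : U' * (K * Iη) = K * (Iη * (Iη * U')) - Iη * U' := by
    have l : U' * (K * Iη) = K * (Iη * U') := by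
      rw [← mul_assoc, hcU'K, mul_assoc, hcU'I]
    have r : K * (Iη * (Iη * U')) - Iη * U' = (K * Iη * Iη - Iη) * U' := by noncomm_ring
    rw [l, r, key, mul_assoc]
  calc U' * (η⁻¹ • (K * Iη)) = η⁻¹ • (U' * (K * Iη)) := (mul_smul_comm _ _ _)
    _ = η⁻¹ • (K * (Iη * (Iη * U')) - Iη * U') := by rw [final]
    _ = K * (Iη * η⁻¹ • U' * Iη) - R * (Iη * η⁻¹ • U' * Iη) := by
        rw [smul_sub, ← e1, ← e2]
end

section
/- (Corollary 4, Eq. (3.11).) Let X be a complex Banach space, t₀ ∈ ℝ, and U : ℝ → B(X) differentiable at t₀ with derivative U′, such that U(t₀) is invertible in B(X) and U(t₀) commutes with U′. Let η ∈ ℂ with η ≠ 0, 1 be such that 1 − η⁻¹U(t) is invertible in B(X) for all t, write I_η := (1 − η⁻¹U(t₀))⁻¹, let D ∈ B(X) be the derivative of t ↦ (1 − η⁻¹U(t))⁻¹ at t₀, and assume I_η − 1 is invertible in B(X). Set ν := η/(1−η), and let a′ ∈ B(X) be an alternative infinitesimal generator: there exists a ∈ B(X) with exp(a) = I_η + ν·1,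 satisfying the chain-rule relation a′ ∘ exp(a) = D, and such that a′ commutes with I_η. Then the operator W := exp(a) − (2ν+1)·1 + (ν²+ν)·exp(−a) is invertible in B(X), and the infinitesimal generator A := U′ ∘ U(t₀)⁻¹ satisfies A = W⁻¹ ∘ a′. -/
open NormedSpace

set_option maxHeartbeats 1000000 in
/-- Corollary 4, Eq. (3.11): with `ν = η/(1-η)` and alternative infinitesimal
generator `a'` (with `exp a = Iη + ν 1`, `a' * exp a = D`, `a'` commuting with `Iη`), the
operator `W = exp a - (2ν+1) 1 + (ν²+ν) exp(-a)` is invertible and the infinitesimal generator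
`A = U' ∘ U(t₀)⁻¹` satisfies `A = W⁻¹ a'`. -/
theorem stmt_9 {X : Type*} [NormedAddCommGroup X] [NormedSpace ℂ X] [CompleteSpace X]
    (t₀ : ℝ) (U : ℝ → X →L[ℂ] X) (U' : X →L[ℂ] X)
    (hU : HasDerivAt U U' t₀) (hUinv : IsUnit (U t₀))
    (hcomm : U t₀ * U' = U' * U t₀)
    (η : ℂ) (hη0 : η ≠ 0) (hη1 : η ≠ 1)
    (hres : ∀ t : ℝ, IsUnit (1 - η⁻¹ • U t))
    (Iη : X →L[ℂ] X) (hIη : Iη = Ring.inverse (1 - η⁻¹ • U t₀))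
    (D : X →L[ℂ] X)
    (hD : HasDerivAt (fun t => Ring.inverse (1 - η⁻¹ • U t)) D t₀)
    (h1 : IsUnit (Iη - 1))
    (ν : ℂ) (hν : ν = η / (1 - η))
    (a a' : X →L[ℂ] X)
    (he : NormedSpace.exp a = Iη + ν • 1)
    (hc : a' * NormedSpace.exp a = D)
    (hca : a' * Iη = Iη * a') :
    IsUnit (NormedSpace.exp a - (2 * ν + 1) • 1 + (ν ^ 2 + ν) • NormedSpace.exp (-a)) ∧
    U' * Ring.inverse (U t₀) =
      Ring.inverse
        (NormedSpace.exp a - (2 * ν + 1) • 1 + (ν ^ 2 + ν) • NormedSpace.exp (-a)) * a' := by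
  let +nondep : NormedAlgebra ℚ (X →L[ℂ] X) := .restrictScalars ℚ ℂ (X →L[ℂ] X)
  obtain ⟨u, hu⟩ := hres t₀
  set E := NormedSpace.exp a with hE
  set En := NormedSpace.exp (-a) with hEn
  set W := E - (2 * ν + 1) • 1 + (ν ^ 2 + ν) • En with hW
  -- inverse facts about exp
  have hEu : IsUnit E := isUnit_exp a
  have hinvE : Ring.inverse E = En := Ring.inverse_exp a
  have hE1 : E * En = 1 := by rw [← hinvE]; exact Ring.mul_inverse_cancel E hEu
  have hE2 : En * E = 1 := by rw [← hinvE]; exact Ring.inverse_mul_cancel E hEu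
  -- Iη is the inverse of u
  have hIu : Iη = ↑u⁻¹ := by rw [hIη, ← hu, Ring.inverse_unit]
  have hIηu : IsUnit Iη := hIu ▸ (u⁻¹).isUnit
  have hIu1 : Iη * (1 - η⁻¹ • U t₀) = 1 := by rw [hIu, ← hu]; exact u.inv_mul
  -- key identity : Iη * U t₀ = η • (Iη - 1)
  have hIU : η⁻¹ • (Iη * U t₀) = Iη - 1 := by
    have := hIu1
    rw [mul_sub, mul_one, mul_smul_comm] at this
    linear_combination (norm := module) -this
  -- commutation facts
  have c1 : Commute U' (U t₀) := (hcomm : Commute (U t₀) U').symm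
  have cu : Commute U' (↑u : X →L[ℂ] X) := by
    rw [hu]
    exact (Commute.one_right U').sub_right (c1.smul_right η⁻¹)
  have cIη : Commute U' Iη := hIu ▸ cu.units_inv_right
  have cUu : Commute (U t₀) (↑u : X →L[ℂ] X) := by
    rw [hu]
    exact ((Commute.one_right (U t₀)).sub_right ((Commute.refl (U t₀)).smul_right η⁻¹))
  have cUIη : Commute (U t₀) Iη := hIu ▸ cUu.units_inv_right
  -- exp as an explicit unit
  let uE : (X →L[ℂ] X)ˣ := ⟨E, En, hE1, hE2⟩
  have cE : Commute U' E := by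
    rw [he]; exact cIη.add_right ((Commute.one_right U').smul_right ν)
  have cUE : Commute (U t₀) E := by
    rw [he]; exact cUIη.add_right ((Commute.one_right (U t₀)).smul_right ν)
  have cEn : Commute U' En := Commute.units_inv_right (u := uE) cE
  have cUEn : Commute (U t₀) En := Commute.units_inv_right (u := uE) cUE
  -- W * E = Iη² - Iη
  have hWE : W * E = Iη * Iη - Iη := by
    have : W * E = E * E - (2 * ν + 1) • E + (ν ^ 2 + ν) • (En * E) := by
      rw [hW]; noncomm_ring
    rw [this, hE2, he]
    simp only [add_mul, sub_mul, mul_add, smul_mul_assoc, mul_smul_comm, smul_smul,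
      one_mul, mul_one, smul_add]
    module
  have hWval : W = (Iη * Iη - Iη) * En := by
    calc W = W * (E * En) := by rw [hE1, mul_one]
    _ = W * E * En := by rw [mul_assoc]
    _ = (Iη * Iη - Iη) * En := by rw [hWE]
  have hfac : Iη * Iη - Iη = Iη * (Iη - 1) := by noncomm_ring
  have hWu : IsUnit W := by
    rw [hWval, hfac]
    exact ((hIηu.mul h1).mul (isUnit_exp (-a)))
  refine ⟨hWu, ?_⟩
  -- compute D
  have hg : HasDerivAt (fun t => 1 - η⁻¹ • U t) (-(η⁻¹ • U')) t₀ :=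
    (hU.const_smul η⁻¹).const_sub 1
  have hfA : HasFDerivAt (Ring.inverse : (X →L[ℂ] X) → (X →L[ℂ] X))
      (-(ContinuousLinearMap.mulLeftRight ℂ _ ↑u⁻¹ ↑u⁻¹)) (1 - η⁻¹ • U t₀) :=
    hu ▸ hasFDerivAt_ringInverse u
  have hD2 : HasDerivAt (fun t => Ring.inverse (1 - η⁻¹ • U t))
      ((-(ContinuousLinearMap.mulLeftRight ℂ _ ↑u⁻¹ ↑u⁻¹)) (-(η⁻¹ • U'))) t₀ := by
    have h := (hfA.restrictScalars ℝ).comp_hasDerivAt t₀ hg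
    simpa [Function.comp_def] using h
  have hDval : D = Iη * (η⁻¹ • U') * Iη := by
    rw [hIu]
    have := hD.unique hD2
    simpa using this
  -- a' in terms of D
  have ha' : a' = D * En := by
    calc a' = a' * (E * En) := by rw [hE1, mul_one]
    _ = (a' * E) * En := by rw [mul_assoc]
    _ = D * En := by rw [hc]
  -- main identity : W * U' = a' * U t₀
  have main : W * U' = a' * U t₀ := by
    have lhs : W * U' = (Iη * Iη - Iη) * U' * En := by
      rw [hWval, mul_assoc, ← cEn.eq, mul_assoc]
    have rhs : a' * U t₀ = (Iη * (η⁻¹ • U') * Iη) * U t₀ * En := by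
      rw [ha', hDval, mul_assoc, ← cUEn.eq, ← mul_assoc]
    rw [lhs, rhs]
    congr 1
    have : (Iη * (η⁻¹ • U') * Iη) * U t₀ = Iη * U' * (η⁻¹ • (Iη * U t₀)) := by
      rw [mul_smul_comm, smul_mul_assoc, smul_mul_assoc, mul_smul_comm,
        mul_assoc (Iη * U'), mul_assoc]
    rw [this, hIU, hfac, mul_assoc, mul_assoc, ← (cIη.symm.sub_left (Commute.one_left U')).eq]
  -- finish
  have final : W * (U' * Ring.inverse (U t₀)) = a' := by
    calc W * (U' * Ring.inverse (U t₀)) = (W * U') * Ring.inverse (U t₀) := by rw [mul_assoc]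
    _ = a' * U t₀ * Ring.inverse (U t₀) := by rw [main]
    _ = a' * (U t₀ * Ring.inverse (U t₀)) := by rw [mul_assoc]
    _ = a' := by rw [Ring.mul_inverse_cancel _ hUinv, mul_one]
  calc U' * Ring.inverse (U t₀)
      = Ring.inverse W * (W * (U' * Ring.inverse (U t₀))) := by
        rw [← mul_assoc, Ring.inverse_mul_cancel _ hWu, one_mul]
  _ = Ring.inverse W * a' := by rw [final]
end

section
/- (Corollary 5, relativistic form.) Let X be a complex Banach space, let x₀ ∈ ℝ be a point of an arbitrary evolution direction (a spatial coordinate xⁱ rather than time), and let U : ℝ → B(X) be differentiable at x₀ with derivative U′, such that U(x₀) is invertible in B(X) and U(x₀) commutes with U′. Let η ∈ ℂ with η ≠ 0, 1 be such that 1 − η⁻¹U(x) is invertible in B(X) for all x, write I_η := (1 − η⁻¹U(x₀))⁻¹, let D ∈ B(X) be the derivative of x ↦ (1 − η⁻¹U(x))⁻¹ at x₀, and assume I_η − 1 is invertible. Set ν := η/(1−η), and let a₁′, a₂′ ∈ B(X) be alternative infinitesimal generators: there exist a₁, a₂ ∈ B(X) with exp(a₁) = η·I_η + (ν−η)·1 and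 exp(a₂) = I_η + ν·1, satisfying a₁′ ∘ exp(a₁) = η·D and a₂′ ∘ exp(a₂) = D, with a₁′ and a₂′ commuting with I_η. Then the infinitesimal generator K := U′ ∘ U(x₀)⁻¹ with respect to the direction xⁱ is represented as K = (1 + ν·(η·(I_η − 1))⁻¹) ∘ a₁′ − (1 + ν·I_η⁻¹) ∘ a₂′. -/
private lemma ring_inverse_eq' {R : Type*} [Ring R] {a b : R}
    (h1 : a * b = 1) (h2 : b * a = 1) : Ring.inverse a = b :=
  Ring.inverse_unit (⟨a, b, h1, h2⟩ : Rˣ)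

private lemma commute_ring_inverse' {R : Type*} [Ring R] {x y : R}
    (h : IsUnit y) (hc : Commute x y) : Commute x (Ring.inverse y) := by
  obtain ⟨u, rfl⟩ := h
  rw [Ring.inverse_unit]
  exact hc.units_inv_right


/-- Corollary 5, relativistic form: the same logarithmic representation with the
evolution direction an arbitrary coordinate `xⁱ` (evolution parameter `x₀ ∈ ℝ`), with
`ν = η/(1-η)`: the infinitesimal generator `K = U' ∘ U(x₀)⁻¹` is represented as
`(1 + ν (η(Iη-1))⁻¹) a₁' - (1 + ν Iη⁻¹) a₂'`. -/
theorem stmt_13 {X : Type*} [NormedAddCommGroup X] [NormedSpace ℂ X] [CompleteSpace X]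
    (x₀ : ℝ) (U : ℝ → X →L[ℂ] X) (U' : X →L[ℂ] X)
    (hU : HasDerivAt U U' x₀) (hUinv : IsUnit (U x₀))
    (hcomm : U x₀ * U' = U' * U x₀)
    (η : ℂ) (hη0 : η ≠ 0) (hη1 : η ≠ 1)
    (hres : ∀ x : ℝ, IsUnit (1 - η⁻¹ • U x))
    (Iη : X →L[ℂ] X) (hIη : Iη = Ring.inverse (1 - η⁻¹ • U x₀))
    (D : X →L[ℂ] X)
    (hD : HasDerivAt (fun x => Ring.inverse (1 - η⁻¹ • U x)) D x₀)
    (h1 : IsUnit (Iη - 1))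
    (ν : ℂ) (hν : ν = η / (1 - η))
    (a₁ a₂ a₁' a₂' : X →L[ℂ] X)
    (he1 : NormedSpace.exp a₁ = η • Iη + (ν - η) • 1)
    (he2 : NormedSpace.exp a₂ = Iη + ν • 1)
    (hc1 : a₁' * NormedSpace.exp a₁ = η • D)
    (hc2 : a₂' * NormedSpace.exp a₂ = D)
    (hca1 : a₁' * Iη = Iη * a₁') (hca2 : a₂' * Iη = Iη * a₂') :
    U' * Ring.inverse (U x₀) =
      (1 + ν • Ring.inverse (η • (Iη - 1))) * a₁'
      - (1 + ν • Ring.inverse Iη) * a₂' := by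
  set A : X →L[ℂ] X := 1 - η⁻¹ • U x₀ with hA
  set E' : X →L[ℂ] X := Ring.inverse (Iη - 1) with hE'
  have h1η : (1 : ℂ) - η ≠ 0 := sub_ne_zero.mpr (Ne.symm hη1)
  -- scalar identities
  have hνη : ν - η = η * ν := by rw [hν]; field_simp; ring
  have hν1 : ν * η⁻¹ = 1 + ν := by rw [hν]; field_simp; ring
  -- basic unit equations
  have hIA : Iη * A = 1 := by rw [hIη]; exact Ring.inverse_mul_cancel _ (hres x₀)
  have hAI : A * Iη = 1 := by rw [hIη]; exact Ring.mul_inverse_cancel _ (hres x₀)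
  have hEE' : (Iη - 1) * E' = 1 := Ring.mul_inverse_cancel _ h1
  have hE'E : E' * (Iη - 1) = 1 := Ring.inverse_mul_cancel _ h1
  -- commutation facts
  have cUx : Commute U' (U x₀) := (show Commute (U x₀) U' from hcomm).symm
  have cUA : Commute U' A := (Commute.one_right U').sub_right (cUx.smul_right η⁻¹)
  have cUI : Commute U' Iη := by rw [hIη]; exact commute_ring_inverse' (hres x₀) cUA
  have cUE' : Commute U' E' := commute_ring_inverse' h1 (cUI.sub_right (Commute.one_right U'))
  have cAI : Commute A Iη := hAI.trans hIA.symm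
  have cAE' : Commute A E' := commute_ring_inverse' h1 (cAI.sub_right (Commute.one_right A))
  have cIE' : Commute Iη E' :=
    commute_ring_inverse' h1 ((Commute.refl Iη).sub_right (Commute.one_right Iη))
  -- value of D
  have hDval : D = η⁻¹ • (Iη * U' * Iη) := by
    have hg : HasDerivAt (fun x => 1 - η⁻¹ • U x) (-(η⁻¹ • U')) x₀ :=
      (hU.const_smul η⁻¹).const_sub 1
    have hF := hasFDerivAt_ringInverse (𝕜 := ℂ) (hres x₀).unit
    rw [(hres x₀).unit_spec] at hF
    have hcomp := (hF.restrictScalars ℝ).comp_hasDerivAt x₀ hg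
    have hui : ((((hres x₀).unit⁻¹ : (X →L[ℂ] X)ˣ)) : X →L[ℂ] X) = Iη := by
      rw [hIη]; exact (Ring.inverse_unit ((hres x₀).unit)).symm
    have := hD.unique hcomp
    rw [this]
    simp [hui, smul_smul, mul_smul_comm, smul_mul_assoc]
  -- E' * (1 - A) = A and E' * A = E' - A
  have hEA : (Iη - 1) * A = 1 - A := by rw [sub_mul, hIA, one_mul]
  have k1 : E' * (1 - A) = A := by
    rw [← hEA, ← mul_assoc, hE'E, one_mul]
  have k1' : E' * A = E' - A := by
    have := k1
    rw [mul_sub, mul_one] at this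
    linear_combination (norm := noncomm_ring) -this
  have hsmulU : η⁻¹ • U x₀ = 1 - A := by rw [hA]; abel
  -- inverses
  have k2 : Ring.inverse (U x₀) = η⁻¹ • (Iη * E') := by
    apply ring_inverse_eq'
    · calc U x₀ * (η⁻¹ • (Iη * E')) = (η⁻¹ • U x₀) * (Iη * E') := by
            rw [mul_smul_comm, smul_mul_assoc]
        _ = ((1 - A) * Iη) * E' := by rw [hsmulU, mul_assoc]
        _ = (Iη - 1) * E' := by rw [sub_mul, one_mul, hAI]
        _ = 1 := hEE'
    · calc (η⁻¹ • (Iη * E')) * U x₀ = Iη * (E' * (η⁻¹ • U x₀)) := by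
            simp [smul_mul_assoc, mul_smul_comm, mul_assoc]
        _ = Iη * A := by rw [hsmulU, k1]
        _ = 1 := hIA
  have k3 : Ring.inverse Iη = A := ring_inverse_eq' hIA hAI
  have k4 : Ring.inverse (η • (Iη - 1)) = η⁻¹ • E' := by
    apply ring_inverse_eq'
    · rw [smul_mul_smul_comm, hEE', mul_inv_cancel₀ hη0, one_smul]
    · rw [smul_mul_smul_comm, hE'E, inv_mul_cancel₀ hη0, one_smul]
  -- a₁' = a₂'
  have he1' : NormedSpace.exp a₁ = η • (Iη + ν • 1) := by
    rw [he1, smul_add, smul_smul, ← hνη]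
  have hc1' : a₁' * (Iη + ν • 1) = D := by
    have h := hc1
    rw [he1', mul_smul_comm] at h
    exact smul_right_injective (X →L[ℂ] X) hη0 h
  have hc2' : a₂' * (Iη + ν • 1) = D := by rw [← he2]; exact hc2
  have hSu : IsUnit (Iη + ν • 1) := by
    letI : NormedAlgebra ℚ (X →L[ℂ] X) := NormedAlgebra.restrictScalars ℚ ℂ _
    exact he2 ▸ NormedSpace.isUnit_exp a₂
  have hab : a₁' = a₂' := hSu.mul_right_cancel (hc1'.trans hc2'.symm)
  have cbS : Commute a₂' (Iη + ν • 1) :=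
    (show Commute a₂' Iη from hca2).add_right ((Commute.one_right a₂').smul_right ν)
  -- final computation
  rw [k2, k3, k4, hab]
  have X1 : (1 + ν • (η⁻¹ • E')) * a₂' - (1 + ν • A) * a₂'
      = (E' * A * (Iη + ν • 1)) * a₂' := by
    have e1 : E' * A * (Iη + ν • 1) = (1 + ν) • E' - ν • A := by
      calc E' * A * (Iη + ν • 1) = E' * (A * Iη + ν • A) := by
            rw [mul_assoc, mul_add, mul_smul_comm, mul_one]
        _ = E' * (1 + ν • A) := by rw [hAI]
        _ = E' + ν • (E' * A) := by rw [mul_add, mul_one, mul_smul_comm]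
        _ = E' + ν • (E' - A) := by rw [k1']
        _ = (1 + ν) • E' - ν • A := by
            rw [smul_sub, add_smul, one_smul]; abel
    rw [e1, smul_smul, hν1, ← sub_mul]
    congr 1
    abel
  rw [X1]
  symm
  calc (E' * A * (Iη + ν • 1)) * a₂' = E' * A * ((Iη + ν • 1) * a₂') := by
        rw [mul_assoc]
    _ = E' * A * D := by rw [← cbS.eq, hc2']
    _ = η⁻¹ • (E' * A * (Iη * U' * Iη)) := by rw [hDval, mul_smul_comm]
    _ = η⁻¹ • (E' * (A * Iη) * (U' * Iη)) := by noncomm_ring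
    _ = η⁻¹ • (E' * (U' * Iη)) := by rw [hAI, mul_one]
    _ = η⁻¹ • (U' * (Iη * E')) := by
        congr 1
        rw [← mul_assoc, ← cUE'.eq, mul_assoc, ← cIE'.eq]
    _ = U' * (η⁻¹ • (Iη * E')) := (mul_smul_comm _ _ _).symm
end

section
/- Let X be a complex Banach space, t₀ ∈ ℝ, and U : ℝ → B(X) differentiable at t₀ with derivative U′, such that U(t₀) is invertible in B(X) and U(t₀) commutes with U′. Let η ∈ ℂ, η ≠ 0, be such that 1 − η⁻¹U(t) is invertible in B(X) for all t, write I_η := (1 − η⁻¹U(t₀))⁻¹, let D ∈ B(X) be the derivative of t ↦ (1 − η⁻¹U(t))⁻¹ at t₀, and assume I_η − 1 and I_η² − I_η are invertible in B(X). Then the infinitesimal generator A := U′ ∘ U(t₀)⁻¹ satisfies A = (I_η − 1)⁻¹ ∘ D − I_η⁻¹ ∘ D = (I_η² − I_η)⁻¹ ∘ D. -/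
private lemma ringInverse_eq {M : Type*} [MonoidWithZero M] (a b : M)
    (h1 : a * b = 1) (h2 : b * a = 1) : Ring.inverse a = b :=
  Ring.inverse_unit ⟨a, b, h1, h2⟩

/-- the simplified core of the logarithmic representations: the infinitesimal
generator `A = U' ∘ U(t₀)⁻¹` satisfies
`A = (Iη - 1)⁻¹ D - Iη⁻¹ D = (Iη² - Iη)⁻¹ D`. -/
theorem stmt_14 {X : Type*} [NormedAddCommGroup X] [NormedSpace ℂ X] [CompleteSpace X]
    (t₀ : ℝ) (U : ℝ → X →L[ℂ] X) (U' : X →L[ℂ] X)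
    (hU : HasDerivAt U U' t₀) (hUinv : IsUnit (U t₀))
    (hcomm : U t₀ * U' = U' * U t₀)
    (η : ℂ) (hη : η ≠ 0)
    (hres : ∀ t : ℝ, IsUnit (1 - η⁻¹ • U t))
    (Iη : X →L[ℂ] X) (hIη : Iη = Ring.inverse (1 - η⁻¹ • U t₀))
    (D : X →L[ℂ] X)
    (hD : HasDerivAt (fun t => Ring.inverse (1 - η⁻¹ • U t)) D t₀)
    (h1 : IsUnit (Iη - 1)) (h2 : IsUnit (Iη ^ 2 - Iη)) :
    U' * Ring.inverse (U t₀) = Ring.inverse (Iη - 1) * D - Ring.inverse Iη * D ∧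
    U' * Ring.inverse (U t₀) = Ring.inverse (Iη ^ 2 - Iη) * D := by
  set u : (X →L[ℂ] X)ˣ := hUinv.unit with hu_def
  set v : (X →L[ℂ] X)ˣ := (hres t₀).unit with hv_def
  have hu : (↑u : (X →L[ℂ] X)) = U t₀ := hUinv.unit_spec
  have hv : (↑v : (X →L[ℂ] X)) = 1 - η⁻¹ • U t₀ := (hres t₀).unit_spec
  have hIη' : Iη = (↑v⁻¹ : (X →L[ℂ] X)) := by rw [hIη, ← hv, Ring.inverse_unit]
  -- compute D
  have hf : HasDerivAt (fun t => (1 : (X →L[ℂ] X)) - η⁻¹ • U t) (0 - η⁻¹ • U') t₀ :=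
    (hasDerivAt_const t₀ (1 : (X →L[ℂ] X))).sub (hU.const_smul η⁻¹)
  have hinv : HasFDerivAt Ring.inverse (-ContinuousLinearMap.mulLeftRight ℂ (X →L[ℂ] X) ↑v⁻¹ ↑v⁻¹)
      ((1 : (X →L[ℂ] X)) - η⁻¹ • U t₀) := hv ▸ hasFDerivAt_ringInverse v
  have hDD := (hinv.restrictScalars ℝ).comp_hasDerivAt t₀ hf
  have hDval : D = η⁻¹ • ((↑v⁻¹ : (X →L[ℂ] X)) * U' * ↑v⁻¹) := by
    have h := hD.unique hDD
    rw [h]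
    simp [ContinuousLinearMap.mulLeftRight_apply, mul_smul_comm, smul_mul_assoc, mul_assoc]
  -- commutation facts
  have hcU : Commute (↑u : (X →L[ℂ] X)) U' := by rw [hu]; exact hcomm
  have hcu : (↑u⁻¹ : (X →L[ℂ] X)) * U' = U' * ↑u⁻¹ := hcU.units_inv_left
  have hcv : (↑v : (X →L[ℂ] X)) * U' = U' * ↑v := by
    rw [hv]; simp [sub_mul, mul_sub, smul_mul_assoc, mul_smul_comm, hcomm]
  have hsmul : (η⁻¹ • U t₀ : (X →L[ℂ] X)) = 1 - ↑v := by rw [hv]; abel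
  have hWu : Ring.inverse (U t₀) = (↑u⁻¹ : (X →L[ℂ] X)) := by rw [← hu, Ring.inverse_unit]
  have hkey : (↑u⁻¹ : (X →L[ℂ] X)) * ↑v = ↑u⁻¹ - η⁻¹ • (1 : (X →L[ℂ] X)) := by
    rw [hv, ← hu, mul_sub, mul_one, mul_smul_comm, Units.inv_mul]
  -- Iη - 1 and its inverse
  have hIm1 : Iη - 1 = η⁻¹ • ((↑v⁻¹ : (X →L[ℂ] X)) * U t₀) := by
    rw [hIη', ← mul_smul_comm, hsmul, mul_sub, mul_one, Units.inv_mul]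
  have hinv1 : Ring.inverse (Iη - 1) = η • ((↑u⁻¹ : (X →L[ℂ] X)) * ↑v) := by
    apply ringInverse_eq
    · rw [hIm1, smul_mul_smul_comm, inv_mul_cancel₀ hη, one_smul]
      rw [← hu]; simp [mul_assoc]
    · rw [hIm1, smul_mul_smul_comm, mul_inv_cancel₀ hη, one_smul]
      rw [← hu]; simp [mul_assoc]
  have hinvI : Ring.inverse Iη = (↑v : (X →L[ℂ] X)) := by
    rw [hIη']; apply ringInverse_eq <;> simp
  -- Iη² - Iη and its inverse
  have hIm2 : Iη ^ 2 - Iη = η⁻¹ • ((↑v⁻¹ : (X →L[ℂ] X)) * ↑v⁻¹ * U t₀) := by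
    have h : Iη ^ 2 - Iη = Iη * (Iη - 1) := by rw [sq, mul_sub, mul_one]
    rw [h, hIm1, hIη']
    simp [mul_smul_comm, mul_assoc]
  have hinv2 : Ring.inverse (Iη ^ 2 - Iη) = η • ((↑u⁻¹ : (X →L[ℂ] X)) * (↑v * ↑v)) := by
    apply ringInverse_eq
    · rw [hIm2, smul_mul_smul_comm, inv_mul_cancel₀ hη, one_smul]
      rw [← hu]; simp [mul_assoc]
    · rw [hIm2, smul_mul_smul_comm, mul_inv_cancel₀ hη, one_smul]
      rw [← hu]; simp [mul_assoc]
  constructor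
  · rw [hWu, hinv1, hinvI, hDval, smul_mul_smul_comm, mul_inv_cancel₀ hη, one_smul,
      mul_smul_comm]
    calc U' * (↑u⁻¹ : (X →L[ℂ] X))
        = U' * (↑u⁻¹ * ↑v) * ↑v⁻¹ := by rw [mul_assoc, Units.mul_inv_cancel_right]
      _ = U' * (↑u⁻¹ - η⁻¹ • 1) * ↑v⁻¹ := by rw [hkey]
      _ = U' * ↑u⁻¹ * ↑v⁻¹ - η⁻¹ • (U' * ↑v⁻¹) := by
          rw [mul_sub, sub_mul, mul_smul_comm, mul_one, smul_mul_assoc]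
      _ = ↑u⁻¹ * ↑v * (↑v⁻¹ * U' * ↑v⁻¹) - η⁻¹ • (↑v * (↑v⁻¹ * U' * ↑v⁻¹)) := by
          rw [← hcu]; simp [mul_assoc, Units.mul_inv_cancel_left]
  · rw [hWu, hinv2, hDval, smul_mul_smul_comm, mul_inv_cancel₀ hη, one_smul]
    calc U' * (↑u⁻¹ : (X →L[ℂ] X))
        = ↑u⁻¹ * U' := hcu.symm
      _ = ↑u⁻¹ * (↑v * U' * ↑v⁻¹) := by rw [hcv, Units.mul_inv_cancel_right]
      _ = ↑u⁻¹ * (↑v * ↑v) * (↑v⁻¹ * U' * ↑v⁻¹) := by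
          simp [mul_assoc, Units.mul_inv_cancel_left]
end
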